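/- Let M be a finitely presented left R-module that is 𝒜-coherent. Then every left R-module is strongly M-𝒜-injective if and only if every right R-module is strongly M-𝒜-flat. -/

import Mathlib

open TensorProduct MulOpposite CategoryTheory

universe u

section NC

variable (R : Type u) [Ring R]

/-- The defining relations of the tensor product `N ⊗[R] X` of a right `R`-module `N`
and a left `R`-module `X` over a (possibly noncommutative) ring `R`, inside `N ⊗[ℤ] X`. -/
def ncRel (N : Type u) [AddCommGroup N] [Module Rᵐᵒᵖ N]
    (X : Type u) [AddCommGroup X] [Module R X] : Submodule ℤ (N ⊗[ℤ] X) :=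
  Submodule.span ℤ {z | ∃ (r : R) (n : N) (x : X), z = (op r • n) ⊗ₜ[ℤ] x - n ⊗ₜ[ℤ] (r • x)}

/-- The tensor product `N ⊗[R] X` of a right `R`-module `N` and a left `R`-module `X`
over a (possibly noncommutative) ring `R`. -/
abbrev NCTensor (N : Type u) [AddCommGroup N] [Module Rᵐᵒᵖ N]
    (X : Type u) [AddCommGroup X] [Module R X] : Type u :=
  (N ⊗[ℤ] X) ⧸ ncRel R N X

/-- Functoriality of the tensor product in the left (right-module) variable. -/
noncomputable def ncMapL {N N' : Type u} [AddCommGroup N] [Module Rᵐᵒᵖ N]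
    [AddCommGroup N'] [Module Rᵐᵒᵖ N'] (g : N →ₗ[Rᵐᵒᵖ] N')
    (X : Type u) [AddCommGroup X] [Module R X] :
    NCTensor R N X →ₗ[ℤ] NCTensor R N' X :=
  Submodule.mapQ _ _ (LinearMap.rTensor X g.toAddMonoidHom.toIntLinearMap) (by
    rw [ncRel, Submodule.span_le]
    rintro _ ⟨r, n, x, rfl⟩
    refine Submodule.subset_span ⟨r, g n, x, ?_⟩
    erw [map_sub, LinearMap.rTensor_tmul, LinearMap.rTensor_tmul]
    simp [map_smul])

/-- Functoriality of the tensor product in the right (left-module) variable. -/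
noncomputable def ncMap (N : Type u) [AddCommGroup N] [Module Rᵐᵒᵖ N]
    {X Y : Type u} [AddCommGroup X] [Module R X] [AddCommGroup Y] [Module R Y]
    (f : X →ₗ[R] Y) : NCTensor R N X →ₗ[ℤ] NCTensor R N Y :=
  Submodule.mapQ _ _ (LinearMap.lTensor N f.toAddMonoidHom.toIntLinearMap) (by
    rw [ncRel, Submodule.span_le]
    rintro _ ⟨r, n, x, rfl⟩
    refine Submodule.subset_span ⟨r, n, f x, ?_⟩
    erw [map_sub, LinearMap.lTensor_tmul, LinearMap.lTensor_tmul]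
    simp [map_smul])

lemma ncMap_mk (N : Type u) [AddCommGroup N] [Module Rᵐᵒᵖ N]
    {X Y : Type u} [AddCommGroup X] [Module R X] [AddCommGroup Y] [Module R Y]
    (f : X →ₗ[R] Y) (w : N ⊗[ℤ] X) :
    ncMap R N f (Submodule.Quotient.mk w) =
      Submodule.Quotient.mk (LinearMap.lTensor N f.toAddMonoidHom.toIntLinearMap w) := by
  unfold ncMap
  exact Submodule.mapQ_apply (p := ncRel R N X) (q := ncRel R N Y) (LinearMap.lTensor N f.toAddMonoidHom.toIntLinearMap) w

section lemmas

variable {R}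
variable {X Y Z : Type u} [AddCommGroup X] [Module R X] [AddCommGroup Y] [Module R Y]
  [AddCommGroup Z] [Module R Z]

lemma toInt_id : ((LinearMap.id : X →ₗ[R] X).toAddMonoidHom).toIntLinearMap =
    (LinearMap.id : X →ₗ[ℤ] X) := rfl

lemma toInt_comp (f : X →ₗ[R] Y) (g : Y →ₗ[R] Z) :
    ((g ∘ₗ f).toAddMonoidHom).toIntLinearMap =
      g.toAddMonoidHom.toIntLinearMap ∘ₗ f.toAddMonoidHom.toIntLinearMap := rfl

lemma toInt_add (f g : X →ₗ[R] Y) :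
    ((f + g).toAddMonoidHom).toIntLinearMap =
      f.toAddMonoidHom.toIntLinearMap + g.toAddMonoidHom.toIntLinearMap := rfl

end lemmas

/-- The functor `N ⊗[R] - : R-Mod ⥤ Ab` for a right `R`-module `N`. -/
noncomputable def ncTensorFunctor (N : Type u) [AddCommGroup N] [Module Rᵐᵒᵖ N] :
    ModuleCat.{u} R ⥤ ModuleCat.{u} ℤ where
  obj X := ModuleCat.of ℤ (NCTensor R N X)
  map {X Y} f := ModuleCat.ofHom (ncMap R N f.hom)
  map_id X := by
    refine ModuleCat.hom_ext <| LinearMap.ext fun z => ?_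
    obtain ⟨w, rfl⟩ := Submodule.Quotient.mk_surjective _ z
    show ncMap R N (LinearMap.id : X →ₗ[R] X) _ = _
    rw [ncMap_mk, toInt_id, LinearMap.lTensor_id]
    rfl
  map_comp {X Y Z} f g := by
    refine ModuleCat.hom_ext <| LinearMap.ext fun z => ?_
    obtain ⟨w, rfl⟩ := Submodule.Quotient.mk_surjective _ z
    show ncMap R N (g.hom ∘ₗ f.hom) (Submodule.Quotient.mk w) = ncMap R N g.hom (ncMap R N f.hom (Submodule.Quotient.mk w))
    rw [ncMap_mk, ncMap_mk, ncMap_mk, toInt_comp, LinearMap.lTensor_comp]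
    rfl

instance ncTensorFunctor_additive (N : Type u) [AddCommGroup N] [Module Rᵐᵒᵖ N] :
    (ncTensorFunctor R N).Additive where
  map_add {X Y f g} := by
    refine ModuleCat.hom_ext <| LinearMap.ext fun z => ?_
    obtain ⟨w, rfl⟩ := Submodule.Quotient.mk_surjective _ z
    show ncMap R N (f.hom + g.hom) (Submodule.Quotient.mk w) = ncMap R N f.hom (Submodule.Quotient.mk w) + ncMap R N g.hom (Submodule.Quotient.mk w)
    rw [ncMap_mk, ncMap_mk, ncMap_mk, toInt_add, LinearMap.lTensor_add]
    rfl

/-- `Tor₁^R(N, Z)` for a right `R`-module `N` and a left `R`-module `Z`, defined as the value at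
`Z` of the first left derived functor of the functor `N ⊗[R] -`. -/
noncomputable def ncTor1 (N : Type u) [AddCommGroup N] [Module Rᵐᵒᵖ N]
    (Z : Type u) [AddCommGroup Z] [Module R Z] : ModuleCat.{u} ℤ :=
  (((ncTensorFunctor R N).leftDerived 1).obj (ModuleCat.of R Z))

/-- `Tor₁^R(N, Z) = 0`. -/
def Tor1IsZero (N : Type u) [AddCommGroup N] [Module Rᵐᵒᵖ N]
    (Z : Type u) [AddCommGroup Z] [Module R Z] : Prop :=
  Limits.IsZero (ncTor1 R N Z)

/-- `Ext¹_R(Z, T) = 0`, where `Ext` is the derived functor of `Hom` on the category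
of left `R`-modules. -/
def Ext1IsZero (Z T : Type u) [AddCommGroup Z] [Module R Z] [AddCommGroup T] [Module R T] :
    Prop :=
  Limits.IsZero ((((Ext ℤ (ModuleCat.{u} R) 1).obj (Opposite.op (ModuleCat.of R Z))).obj
    (ModuleCat.of R T)))

end NC

open MulOpposite


section Char

variable (R : Type u) [Ring R]

/-- The right `R`-module structure on the character module `A⁺ = Hom_ℤ(A, ℚ/ℤ)` of a left
`R`-module `A`, given by `(c • r) (a) = c (r • a)`. -/
instance charModuleRight (A : Type u) [AddCommGroup A] [Module R A] :
    Module Rᵐᵒᵖ (CharacterModule A) where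
  smul r c := (c.comp (DistribMulAction.toAddMonoidHom A r.unop) : A →+ _)
  one_smul c := DFunLike.ext _ _ fun a => congrArg c (one_smul R a)
  mul_smul r s c := DFunLike.ext _ _ fun a => congrArg c (mul_smul s.unop r.unop a)
  smul_zero r := rfl
  smul_add r c c' := rfl
  add_smul r s c := DFunLike.ext _ _ fun a => by
    show c ((r.unop + s.unop) • a) = c (r.unop • a) + c (s.unop • a)
    rw [add_smul, map_add]
  zero_smul c := DFunLike.ext _ _ fun a => by
    show c ((0 : R) • a) = 0
    rw [zero_smul, map_zero]

/-- The left `R`-module structure on the character module `N⁺ = Hom_ℤ(N, ℚ/ℤ)` of a right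
`R`-module `N`, given by `(r • c) (n) = c (n • r)`. -/
instance charModuleLeft (N : Type u) [AddCommGroup N] [Module Rᵐᵒᵖ N] :
    Module R (CharacterModule N) where
  smul r c := (c.comp (DistribMulAction.toAddMonoidHom N (op r)) : N →+ _)
  one_smul c := DFunLike.ext _ _ fun n => congrArg c (one_smul Rᵐᵒᵖ n)
  mul_smul r s c := DFunLike.ext _ _ fun n => congrArg c (mul_smul (op s) (op r) n)
  smul_zero r := rfl
  smul_add r c c' := rfl
  add_smul r s c := DFunLike.ext _ _ fun n => by
    show c ((op r + op s) • n) = c (op r • n) + c (op s • n)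
    rw [add_smul, map_add]
  zero_smul c := DFunLike.ext _ _ fun n => by
    show c ((0 : Rᵐᵒᵖ) • n) = 0
    rw [zero_smul, map_zero]

end Char

section Classes

variable (R : Type u) [Ring R] (M : Type u) [AddCommGroup M] [Module R M]

/-- `T` is `M`-`𝒜`-injective if, for every `A ∈ 𝒜`, every homomorphism `A → T` extends to `M`,
i.e. the restriction map `Hom(M, T) → Hom(A, T)` is surjective. -/
def MAInjective (𝒜 : Set (Submodule R M)) (T : Type u) [AddCommGroup T] [Module R T] : Prop :=
  ∀ A ∈ 𝒜, ∀ f : (↥A) →ₗ[R] T, ∃ g : M →ₗ[R] T, g ∘ₗ A.subtype = f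

/-- `T` is strongly `M`-`𝒜`-injective if `Ext¹_R(M/A, T) = 0` for all `A ∈ 𝒜`. -/
def SMAInjective (𝒜 : Set (Submodule R M)) (T : Type u) [AddCommGroup T] [Module R T] : Prop :=
  ∀ A ∈ 𝒜, Ext1IsZero R (M ⧸ A) T

/-- A right `R`-module `N` is `M`-`𝒜`-flat if `N ⊗ A → N ⊗ M` is injective for all `A ∈ 𝒜`. -/
def MAFlat (𝒜 : Set (Submodule R M)) (N : Type u) [AddCommGroup N] [Module Rᵐᵒᵖ N] : Prop :=
  ∀ A ∈ 𝒜, Function.Injective (ncMap R N A.subtype)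

/-- A right `R`-module `N` is strongly `M`-`𝒜`-flat if `Tor₁^R(N, M/A) = 0` for all `A ∈ 𝒜`. -/
def SMAFlat (𝒜 : Set (Submodule R M)) (N : Type u) [AddCommGroup N] [Module Rᵐᵒᵖ N] : Prop :=
  ∀ A ∈ 𝒜, Tor1IsZero R N (M ⧸ A)

end Classes

section Flat

variable (R : Type u) [Ring R]

/-- A left `R`-module `Z` is flat if tensoring with it preserves injectivity of morphisms of
right `R`-modules. -/
def FlatLeftModule (Z : Type u) [AddCommGroup Z] [Module R Z] : Prop :=
  ∀ (N N' : Type u) [AddCommGroup N] [Module Rᵐᵒᵖ N] [AddCommGroup N'] [Module Rᵐᵒᵖ N']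
    (g : N' →ₗ[Rᵐᵒᵖ] N), Function.Injective g → Function.Injective (ncMapL R g Z)

end Flat

/-! ### Auxiliary development for the proof -/

section AuxProof

open CategoryTheory Limits

namespace Stmt7Aux

variable {R : Type u} [Ring R]

/-- Factor a linear map through a surjection whose kernel it kills. -/
lemma factor_through {S : Type*} [Ring S] {A B C : Type*} [AddCommGroup A] [AddCommGroup B]
    [AddCommGroup C] [Module S A] [Module S B] [Module S C] (p : A →ₗ[S] B)
    (hp : Function.Surjective p) (f : A →ₗ[S] C) (h : LinearMap.ker p ≤ LinearMap.ker f) :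
    ∃ s : B →ₗ[S] C, s ∘ₗ p = f := by
  let e : (A ⧸ LinearMap.ker p) ≃ₗ[S] B := p.quotKerEquivOfSurjective hp
  refine ⟨(LinearMap.ker p).liftQ f h ∘ₗ e.symm.toLinearMap, ?_⟩
  ext a
  have he : e (Submodule.Quotient.mk a) = p a := rfl
  have : e.symm (p a) = Submodule.Quotient.mk a := by
    rw [← he, e.symm_apply_apply]
  simp only [LinearMap.comp_apply, LinearEquiv.coe_coe, this, Submodule.liftQ_apply]

section ExtIff

variable {Z T : Type u} [AddCommGroup Z] [Module R Z] [AddCommGroup T] [Module R T]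

/-- `Ext¹(Z, T) = 0` iff every 1-cocycle on a projective resolution is a coboundary. -/
lemma ext1IsZero_iff (P : ProjectiveResolution (ModuleCat.of R Z)) :
    Ext1IsZero R Z T ↔ ∀ f : P.complex.X 1 →ₗ[R] T,
      f.comp ((P.complex.d 2 1).hom : P.complex.X 2 →ₗ[R] P.complex.X 1) = 0 →
      ∃ g : P.complex.X 0 →ₗ[R] T, g.comp (P.complex.d 1 0).hom = f := by
  have e := P.isoExt (R := ℤ) 1 (ModuleCat.of R T)
  have h1 : Ext1IsZero R Z T ↔
      IsZero ((P.complex.linearYonedaObj ℤ (ModuleCat.of R T)).homology 1) :=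
    ⟨fun h => (h.of_iso e.symm), fun h => h.of_iso e⟩
  rw [Ext1IsZero] at h1
  rw [show Ext1IsZero R Z T ↔ _ from h1, ← HomologicalComplex.exactAt_iff_isZero_homology,
    HomologicalComplex.exactAt_iff' _ 0 1 2 (by simp) (by simp),
    ShortComplex.moduleCat_exact_iff]
  constructor
  · intro H f hf
    obtain ⟨x₁, hx⟩ := H (ModuleCat.ofHom f : P.complex.X 1 ⟶ ModuleCat.of R T)
      (ModuleCat.hom_ext hf)
    exact ⟨(x₁ : P.complex.X 0 ⟶ ModuleCat.of R T).hom, congrArg ModuleCat.Hom.hom hx⟩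
  · intro H x₂ hx₂
    obtain ⟨g, hg⟩ := H (x₂ : P.complex.X 1 ⟶ ModuleCat.of R T).hom
      (congrArg ModuleCat.Hom.hom hx₂)
    exact ⟨(ModuleCat.ofHom g : P.complex.X 0 ⟶ ModuleCat.of R T), ModuleCat.hom_ext hg⟩

/-- `Tor₁(N, Z) = 0` gives exactness of the tensored resolution in degree 1. -/
lemma tor1_exact {N : Type u} [AddCommGroup N] [Module Rᵐᵒᵖ N]
    (P : ProjectiveResolution (ModuleCat.of R Z)) (h : Tor1IsZero R N Z) :
    ∀ z : NCTensor R N (P.complex.X 1),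
      ncMap R N ((P.complex.d 1 0).hom : P.complex.X 1 →ₗ[R] P.complex.X 0) z = 0 →
      ∃ w : NCTensor R N (P.complex.X 2),
        ncMap R N ((P.complex.d 2 1).hom : P.complex.X 2 →ₗ[R] P.complex.X 1) w = z := by
  have e := P.isoLeftDerivedObj (ncTensorFunctor R N) 1
  rw [Tor1IsZero, ncTor1] at h
  have h1 : IsZero ((((ncTensorFunctor R N).mapHomologicalComplex _).obj P.complex).homology 1) :=
    h.of_iso e.symm
  rw [← HomologicalComplex.exactAt_iff_isZero_homology,
    HomologicalComplex.exactAt_iff' _ 2 1 0 (by simp) (by simp),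
    ShortComplex.moduleCat_exact_iff] at h1
  exact h1

end ExtIff

section CharNC

variable {N : Type u} [AddCommGroup N] [Module Rᵐᵒᵖ N]
variable {X : Type u} [AddCommGroup X] [Module R X]

/-- The character of `N ⊗[ℤ] X` associated to an `R`-linear map `X → N⁺`. -/
noncomputable def ncCharAux (f : X →ₗ[R] CharacterModule N) :
    N ⊗[ℤ] X →ₗ[ℤ] AddCircle (1 : ℚ) :=
  TensorProduct.lift <| LinearMap.flip <|
    { toFun := fun x => ((f x).toIntLinearMap : N →ₗ[ℤ] AddCircle (1 : ℚ))
      map_add' := fun x y => by ext n; simp only [map_add]; rfl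
      map_smul' := fun (z : ℤ) x => by
        ext n
        have : f (z • x) = z • f x := map_zsmul f z x
        simp only [this, RingHom.id_apply]
        rfl }

@[simp] lemma ncCharAux_tmul (f : X →ₗ[R] CharacterModule N) (n : N) (x : X) :
    ncCharAux f (n ⊗ₜ[ℤ] x) = f x n := rfl

lemma ncCharAux_rel_le (f : X →ₗ[R] CharacterModule N) :
    ncRel R N X ≤ LinearMap.ker (ncCharAux f) := by
  rw [ncRel, Submodule.span_le]
  rintro _ ⟨r, n, x, rfl⟩
  simp only [SetLike.mem_coe, LinearMap.mem_ker, map_sub, ncCharAux_tmul]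
  have h1 : f (r • x) = r • f x := map_smul f r x
  have h2 : (r • f x) n = f x (op r • n) := rfl
  rw [h1, h2, sub_self]

/-- The character of `NCTensor R N X` associated to an `R`-linear map `X → N⁺`. -/
noncomputable def ncChar (f : X →ₗ[R] CharacterModule N) :
    NCTensor R N X →ₗ[ℤ] AddCircle (1 : ℚ) :=
  Submodule.liftQ _ (ncCharAux f) (ncCharAux_rel_le f)

@[simp] lemma ncChar_mk (f : X →ₗ[R] CharacterModule N) (n : N) (x : X) :
    ncChar f (Submodule.Quotient.mk (n ⊗ₜ[ℤ] x)) = f x n := rfl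

/-- The `R`-linear map `X → N⁺` associated to a character of `NCTensor R N X`. -/
noncomputable def charToHom (ψ : NCTensor R N X →ₗ[ℤ] AddCircle (1 : ℚ)) :
    X →ₗ[R] CharacterModule N where
  toFun x := ((ψ ∘ₗ (ncRel R N X).mkQ ∘ₗ ((TensorProduct.mk ℤ N X).flip x)).toAddMonoidHom :
    CharacterModule N)
  map_add' x y := by
    refine DFunLike.ext _ _ fun n => ?_
    show ψ (Submodule.Quotient.mk (n ⊗ₜ[ℤ] (x + y))) =
      ψ (Submodule.Quotient.mk (n ⊗ₜ[ℤ] x)) + ψ (Submodule.Quotient.mk (n ⊗ₜ[ℤ] y))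
    rw [TensorProduct.tmul_add, Submodule.Quotient.mk_add, map_add]
  map_smul' r x := by
    refine DFunLike.ext _ _ fun n => ?_
    show ψ (Submodule.Quotient.mk (n ⊗ₜ[ℤ] (r • x))) =
      ψ (Submodule.Quotient.mk ((op r • n) ⊗ₜ[ℤ] x))
    congr 1
    rw [Submodule.Quotient.eq]
    have h := neg_mem (Submodule.subset_span (R := ℤ)
      (s := {z | ∃ (r : R) (n : N) (x : X), z = (op r • n) ⊗ₜ[ℤ] x - n ⊗ₜ[ℤ] (r • x)})
      ⟨r, n, x, rfl⟩)
    rw [neg_sub] at h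
    rw [ncRel]
    exact h

@[simp] lemma charToHom_apply (ψ : NCTensor R N X →ₗ[ℤ] AddCircle (1 : ℚ)) (x : X) (n : N) :
    charToHom ψ x n = ψ (Submodule.Quotient.mk (n ⊗ₜ[ℤ] x)) := rfl

end CharNC

section TorToExt

variable {Z : Type u} [AddCommGroup Z] [Module R Z]
variable {N : Type u} [AddCommGroup N] [Module Rᵐᵒᵖ N]

/-- If `Tor₁(N, Z) = 0` then `Ext¹(Z, N⁺) = 0`. -/
lemma ext1IsZero_char_of_tor1IsZero (P : ProjectiveResolution (ModuleCat.of R Z))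
    (h : Tor1IsZero R N Z) : Ext1IsZero R Z (CharacterModule N) := by
  rw [ext1IsZero_iff P]
  intro f hf
  set d10 : P.complex.X 1 →ₗ[R] P.complex.X 0 := (P.complex.d 1 0).hom with hd10
  set d21 : P.complex.X 2 →ₗ[R] P.complex.X 1 := (P.complex.d 2 1).hom with hd21
  have hvanish : ∀ w, ncChar f (ncMap R N d21 w) = 0 := by
    intro w
    obtain ⟨u, rfl⟩ := Submodule.Quotient.mk_surjective _ w
    rw [ncMap_mk]
    induction u using TensorProduct.induction_on with
    | zero => rw [map_zero]; exact map_zero _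
    | tmul n y =>
        rw [LinearMap.lTensor_tmul]
        show f (d21 y) n = 0
        have : f (d21 y) = 0 := LinearMap.congr_fun hf y
        rw [this]; rfl
    | add a b ha hb =>
        rw [map_add, Submodule.Quotient.mk_add, map_add, ha, hb, add_zero]
  have hker : LinearMap.ker (ncMap R N d10) ≤ LinearMap.ker (ncChar f) := by
    intro z hz
    obtain ⟨w, hw⟩ := tor1_exact P h z hz
    rw [LinearMap.mem_ker, ← hw]
    exact hvanish w
  set δ : NCTensor R N (P.complex.X 1) →ₗ[ℤ] NCTensor R N (P.complex.X 0) :=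
    ncMap R N d10 with hδ
  obtain ⟨χ', hχ'⟩ := factor_through δ.rangeRestrict (LinearMap.surjective_rangeRestrict δ)
    (ncChar f) (by rw [LinearMap.ker_rangeRestrict]; exact hker)
  obtain ⟨ψc, hψc⟩ := CharacterModule.dual_surjective_of_injective (R := ℤ)
    ((LinearMap.range δ).subtype) (Submodule.injective_subtype _) χ'.toAddMonoidHom
  refine ⟨charToHom (ψc.toIntLinearMap), ?_⟩
  refine LinearMap.ext fun y => DFunLike.ext _ _ fun n => ?_
  show ψc (Submodule.Quotient.mk (n ⊗ₜ[ℤ] (d10 y))) = f y n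
  have h1 : (Submodule.Quotient.mk (n ⊗ₜ[ℤ] (d10 y)) : NCTensor R N (P.complex.X 0)) =
      δ (Submodule.Quotient.mk (n ⊗ₜ[ℤ] y)) := by
    rw [hδ, ncMap_mk, LinearMap.lTensor_tmul]
    rfl
  rw [h1]
  set v : NCTensor R N (P.complex.X 1) := Submodule.Quotient.mk (n ⊗ₜ[ℤ] y) with hv
  have h3 : ψc (δ v) = (CharacterModule.dual (R := ℤ) ((LinearMap.range δ).subtype) ψc)
      (δ.rangeRestrict v) := rfl
  rw [h3, hψc]
  show χ' (δ.rangeRestrict v) = f y n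
  have h4 : χ' (δ.rangeRestrict v) = (χ' ∘ₗ δ.rangeRestrict) v := rfl
  rw [h4, hχ']
  rfl

end TorToExt

section Resol

variable {Z T : Type u} [AddCommGroup Z] [Module R Z] [AddCommGroup T] [Module R T]
variable (P : ProjectiveResolution (ModuleCat.of R Z))

lemma res_surjective : Function.Surjective ((P.π.f 0).hom : P.complex.X 0 →ₗ[R] Z) :=
  (ModuleCat.epi_iff_surjective (P.π.f 0)).1 inferInstance

lemma res_ker : LinearMap.ker ((P.π.f 0).hom : P.complex.X 0 →ₗ[R] Z) =
    LinearMap.range ((P.complex.d 1 0).hom : P.complex.X 1 →ₗ[R] P.complex.X 0) :=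
  ((ShortComplex.exact_of_g_is_cokernel (ShortComplex.mk _ _ P.complex_d_comp_π_f_zero)
    P.isColimitCokernelCofork).moduleCat_range_eq_ker).symm

/-- If `Ext¹(Z,T) = 0`, every map from the first syzygy of `Z` into `T` extends. -/
lemma ext_extend (hT : Ext1IsZero R Z T)
    (φ : ↥(LinearMap.ker ((P.π.f 0).hom : P.complex.X 0 →ₗ[R] Z)) →ₗ[R] T) :
    ∃ g : P.complex.X 0 →ₗ[R] T, ∀ k, g k.1 = φ k := by
  have hmem : ∀ y, ((P.complex.d 1 0).hom : P.complex.X 1 →ₗ[R] P.complex.X 0) y ∈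
      LinearMap.ker ((P.π.f 0).hom : P.complex.X 0 →ₗ[R] Z) := fun y => by
    rw [res_ker P]; exact ⟨y, rfl⟩
  let π₁ := ((P.complex.d 1 0).hom : P.complex.X 1 →ₗ[R] P.complex.X 0).codRestrict _ hmem
  have hπ₁ : Function.Surjective π₁ := by
    rintro ⟨x, hx⟩
    rw [res_ker P] at hx
    obtain ⟨y, hy⟩ := hx
    exact ⟨y, Subtype.ext hy⟩
  have hcocycle : (φ.comp π₁).comp
      ((P.complex.d 2 1).hom : P.complex.X 2 →ₗ[R] P.complex.X 1) = 0 := by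
    refine LinearMap.ext fun y => ?_
    have h0 : π₁ (((P.complex.d 2 1).hom : P.complex.X 2 →ₗ[R] P.complex.X 1) y) = 0 := by
      refine Subtype.ext ?_
      show ((P.complex.d 1 0).hom : P.complex.X 1 →ₗ[R] P.complex.X 0)
        (((P.complex.d 2 1).hom : P.complex.X 2 →ₗ[R] P.complex.X 1) y) = _
      have h1 : (((P.complex.d 1 0).hom : P.complex.X 1 →ₗ[R] P.complex.X 0).comp
          ((P.complex.d 2 1).hom : P.complex.X 2 →ₗ[R] P.complex.X 1)) y = 0 :=
        LinearMap.congr_fun (congrArg ModuleCat.Hom.hom (P.complex.d_comp_d 2 1 0)) y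
      rw [ZeroMemClass.coe_zero, ← h1]
      rfl
    show φ (π₁ _) = 0
    rw [h0, map_zero]
  obtain ⟨g, hg⟩ := (ext1IsZero_iff P).1 hT (φ.comp π₁) hcocycle
  refine ⟨g, fun k => ?_⟩
  obtain ⟨y, rfl⟩ := hπ₁ k
  exact LinearMap.congr_fun hg y

lemma module_projective_of_projective (W : ModuleCat.{u} R) [Projective W] :
    Module.Projective R W := by
  rw [IsProjective.iff_projective]
  rwa [ModuleCat.of_coe]

lemma ext1IsZero_of_projective (hproj : Module.Projective R Z) : Ext1IsZero R Z T := by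
  have : Projective (ModuleCat.of R Z) := (IsProjective.iff_projective Z).1 hproj
  exact isZero_Ext_succ_of_projective (R := ℤ) (ModuleCat.of R Z) (ModuleCat.of R T) 0

lemma tor1IsZero_of_projective {N : Type u} [AddCommGroup N] [Module Rᵐᵒᵖ N]
    (hproj : Module.Projective R Z) : Tor1IsZero R N Z := by
  have : Projective (ModuleCat.of R Z) := (IsProjective.iff_projective Z).1 hproj
  exact (ncTensorFunctor R N).isZero_leftDerived_obj_projective_succ 0 (ModuleCat.of R Z)

lemma projective_of_forall_ext
    (h : ∀ (T : Type u) [AddCommGroup T] [Module R T], Ext1IsZero R Z T) :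
    Module.Projective R Z := by
  obtain P := (inferInstance : HasProjectiveResolution (ModuleCat.of R Z)).out.some
  set π : P.complex.X 0 →ₗ[R] Z := (P.π.f 0).hom with hπdef
  set K := LinearMap.ker π with hK
  obtain ⟨g, hg⟩ := ext_extend P (h ↥K) (LinearMap.id : ↥K →ₗ[R] ↥K)
  have hπs : Function.Surjective π := res_surjective P
  have hP0 : Module.Projective R (P.complex.X 0) := module_projective_of_projective _
  have hside : LinearMap.ker π ≤ LinearMap.ker (LinearMap.id - K.subtype.comp g) := by
    intro x hx
    have h1 : g x = ⟨x, hx⟩ := hg ⟨x, hx⟩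
    show (LinearMap.id : P.complex.X 0 →ₗ[R] P.complex.X 0) x - K.subtype (g x) = 0
    rw [h1]
    show x - x = 0
    exact sub_self x
  obtain ⟨s, hs⟩ := factor_through π hπs (LinearMap.id - K.subtype.comp g) hside
  refine Module.Projective.of_split s π ?_
  refine LinearMap.ext fun z => ?_
  obtain ⟨x, rfl⟩ := hπs z
  have h1 : s (π x) = x - K.subtype (g x) := LinearMap.congr_fun hs x
  show π (s (π x)) = π x
  rw [h1, map_sub]
  have h2 : π (K.subtype (g x)) = 0 := (g x).2
  rw [h2, sub_zero]

end Resol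

section Eval

/-- The canonical evaluation map `K → K⁺⁺`. -/
def evalCh {K : Type u} [AddCommGroup K] [Module R K] :
    K →ₗ[R] CharacterModule (CharacterModule K) where
  toFun k := (AddMonoidHom.mk' (fun c : CharacterModule K => c k) (fun _ _ => rfl) :
    CharacterModule (CharacterModule K))
  map_add' k k' := DFunLike.ext _ _ fun c => map_add c k k'
  map_smul' r k := DFunLike.ext _ _ fun c => rfl

@[simp] lemma evalCh_apply {K : Type u} [AddCommGroup K] [Module R K] (k : K)
    (c : CharacterModule K) : evalCh (R := R) k c = c k := rfl

lemma charSum_apply {A : Type*} [AddCommGroup A] {ι : Type*} (s : Finset ι)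
    (f : ι → CharacterModule A) (a : A) : (∑ i ∈ s, f i) a = ∑ i ∈ s, f i a := by
  classical
  induction s using Finset.cons_induction with
  | empty => rfl
  | cons i s hi ih =>
      rw [Finset.sum_cons, Finset.sum_cons, ← ih]
      rfl

end Eval

section BigTor

variable {Z : Type u} [AddCommGroup Z] [Module R Z]

/-- If characters of the syzygy `K = ker π` extend linearly to `P0` (in the double-dual
formulation), and `Z` is finitely presented, then `Z` is projective. -/
lemma projective_of_char_extend {P0 : Type u} [AddCommGroup P0] [Module R P0]
    [Module.Projective R P0] [Module.FinitePresentation R Z]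
    (π : P0 →ₗ[R] Z) (hπs : Function.Surjective π)
    (g : P0 →ₗ[R] CharacterModule (CharacterModule ↥(LinearMap.ker π)))
    (hg : ∀ k : ↥(LinearMap.ker π), g k.1 = evalCh (R := R) k) :
    Module.Projective R Z := by
  classical
  obtain ⟨n, q, hq⟩ := Module.Finite.exists_fin' R Z
  have hfg : (LinearMap.ker q).FG := Module.FinitePresentation.fg_ker q hq
  obtain ⟨m, v, hv⟩ := Submodule.fg_iff_exists_fin_generating_family.mp hfg
  obtain ⟨gbar, hgbar⟩ := Module.projective_lifting_property π q hπs
  have hvK : ∀ i, gbar (v i) ∈ LinearMap.ker π := by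
    intro i
    have hvi : v i ∈ LinearMap.ker q := hv ▸ Submodule.subset_span ⟨i, rfl⟩
    show π (gbar (v i)) = 0
    rw [← LinearMap.comp_apply, hgbar]
    exact hvi
  have hexpand : ∀ i, gbar (v i) = ∑ j, v i j • gbar (Pi.single j 1) := by
    intro i
    have h1 : v i = ∑ j, v i j • (Pi.single j (1 : R) : Fin n → R) := by
      funext a
      rw [Finset.sum_apply]
      simp [Pi.single_apply]
    conv_lhs => rw [h1]
    rw [map_sum]
    exact Finset.sum_congr rfl fun j _ => map_smul gbar _ _
  set k : Fin m → ↥(LinearMap.ker π) := fun i => ⟨gbar (v i), hvK i⟩ with hkdef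
  -- the system of equations is solvable in `K`
  have main : ∃ y : Fin n → ↥(LinearMap.ker π), ∀ i, k i = ∑ j, v i j • y j := by
    by_contra hcon
    push_neg at hcon
    set Φ : (Fin n → ↥(LinearMap.ker π)) →+ (Fin m → ↥(LinearMap.ker π)) :=
      AddMonoidHom.mk' (fun y i => ∑ j, v i j • y j) (by
        intro y y'
        funext i
        show ∑ j, v i j • (y j + y' j) = (∑ j, v i j • y j) + (∑ j, v i j • y' j)
        rw [← Finset.sum_add_distrib]
        exact Finset.sum_congr rfl fun j _ => smul_add _ _ _) with hΦ
    have hknot : k ∉ Φ.range := by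
      rintro ⟨y, hy⟩
      obtain ⟨i, hi⟩ := hcon y
      exact hi ((congrFun hy i).symm)
    have hkne : (QuotientAddGroup.mk' Φ.range) k ≠ 0 := fun h0 =>
      hknot ((QuotientAddGroup.eq_zero_iff k).mp h0)
    obtain ⟨c, hc⟩ := CharacterModule.exists_character_apply_ne_zero_of_ne_zero hkne
    set χ : CharacterModule (Fin m → ↥(LinearMap.ker π)) :=
      c.comp (QuotientAddGroup.mk' Φ.range) with hχ
    set χi : Fin m → CharacterModule ↥(LinearMap.ker π) :=
      fun i => χ.comp (AddMonoidHom.single (fun _ => ↥(LinearMap.ker π)) i) with hχidef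
    have hdecomp : ∀ w : Fin m → ↥(LinearMap.ker π), χ w = ∑ i, χi i (w i) := by
      intro w
      conv_lhs => rw [← Finset.univ_sum_single w]
      rw [map_sum]
      rfl
    have hPhiZero : ∀ z, χ (Φ z) = 0 := by
      intro z
      show c ((QuotientAddGroup.mk' Φ.range) (Φ z)) = 0
      have h0 : (QuotientAddGroup.mk' Φ.range) (Φ z) = 0 :=
        (QuotientAddGroup.eq_zero_iff _).mpr ⟨z, rfl⟩
      rw [h0, map_zero]
    have hA : ∀ (j : Fin n) (y : ↥(LinearMap.ker π)), ∑ i, χi i (v i j • y) = 0 := by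
      intro j y
      have h1 := hPhiZero (Pi.single j y)
      rw [hdecomp] at h1
      have h2 : ∀ i, Φ (Pi.single j y) i = v i j • y := by
        intro i
        show ∑ j', v i j' • (Pi.single j y) j' = v i j • y
        rw [Finset.sum_eq_single j]
        · rw [Pi.single_eq_same]
        · intro b _ hb
          rw [Pi.single_eq_of_ne hb, smul_zero]
        · intro hj; exact absurd (Finset.mem_univ j) hj
      calc ∑ i, χi i (v i j • y) = ∑ i, χi i (Φ (Pi.single j y) i) :=
            Finset.sum_congr rfl fun i _ => by rw [h2 i]
        _ = 0 := h1
    have hχk : χ k = 0 := by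
      rw [hdecomp]
      have hstep : ∀ i, χi i (k i) = g (gbar (v i)) (χi i) := by
        intro i
        have hgi := hg (k i)
        calc χi i (k i) = evalCh (R := R) (k i) (χi i) := rfl
          _ = g (k i).1 (χi i) := by rw [hgi]
      rw [Finset.sum_congr rfl fun i _ => hstep i]
      have hgexp : ∀ i, g (gbar (v i)) (χi i) = ∑ j, g (v i j • gbar (Pi.single j 1)) (χi i) := by
        intro i
        rw [hexpand i, map_sum, charSum_apply]
      rw [Finset.sum_congr rfl fun i _ => hgexp i]
      have hswap : ∀ i j, g (v i j • gbar (Pi.single j 1)) (χi i) =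
          g (gbar (Pi.single j 1)) (op (v i j) • χi i) := by
        intro i j
        rw [map_smul g]
        rfl
      rw [Finset.sum_comm]
      rw [Finset.sum_congr rfl fun j _ => Finset.sum_congr rfl fun i _ => hswap i j]
      refine Finset.sum_eq_zero fun j _ => ?_
      have hzero : (∑ i, op (v i j) • χi i :
          CharacterModule ↥(LinearMap.ker π)) = 0 := by
        refine DFunLike.ext _ _ fun y => ?_
        rw [charSum_apply]
        show ∑ i, χi i (v i j • y) = 0
        exact hA j y
      rw [← map_sum (g (gbar (Pi.single j 1))), hzero, map_zero]
    exact hc hχk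
  obtain ⟨y, hy⟩ := main
  -- correct the lift `gbar` by `y` to kill `ker q`
  set ℓ : (Fin n → R) →ₗ[R] P0 :=
    { toFun := fun u => ∑ j, u j • (y j : P0)
      map_add' := fun u u' => by
        show ∑ j, (u j + u' j) • (y j : P0) = _
        rw [← Finset.sum_add_distrib]
        exact Finset.sum_congr rfl fun j _ => add_smul _ _ _
      map_smul' := fun r u => by
        show ∑ j, (r * u j) • (y j : P0) = r • ∑ j, u j • (y j : P0)
        rw [Finset.smul_sum]
        exact Finset.sum_congr rfl fun j _ => mul_smul _ _ _ } with hℓ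
  have htv : ∀ i, gbar (v i) - ℓ (v i) = 0 := by
    intro i
    have h1 : (k i : P0) = ((∑ j, v i j • y j : ↥(LinearMap.ker π)) : P0) := by
      rw [← hy i]
    have h2 : ((∑ j, v i j • y j : ↥(LinearMap.ker π)) : P0) = ∑ j, v i j • (y j : P0) := by
      rw [Submodule.coe_sum]
      rfl
    have h3 : gbar (v i) = ℓ (v i) := by
      rw [show gbar (v i) = (k i : P0) from rfl, h1, h2]
      rfl
    rw [h3, sub_self]
  have hker : LinearMap.ker q ≤ LinearMap.ker (gbar - ℓ) := by
    rw [← hv, Submodule.span_le]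
    rintro _ ⟨i, rfl⟩
    show gbar (v i) - ℓ (v i) = 0
    exact htv i
  obtain ⟨s, hs⟩ := factor_through q hq (gbar - ℓ) hker
  refine Module.Projective.of_split s π ?_
  refine LinearMap.ext fun z => ?_
  obtain ⟨u, rfl⟩ := hq z
  have h1 : s (q u) = gbar u - ℓ u := LinearMap.congr_fun hs u
  show π (s (q u)) = q u
  rw [h1, map_sub]
  have h2 : π (ℓ u) = 0 := by
    show π (∑ j, u j • (y j : P0)) = 0
    rw [map_sum]
    refine Finset.sum_eq_zero fun j _ => ?_
    rw [map_smul]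
    have h3 : π (y j : P0) = 0 := (y j).2
    rw [h3, smul_zero]
  have h4 : π (gbar u) = q u := LinearMap.congr_fun hgbar u
  rw [h2, h4, sub_zero]

lemma projective_of_forall_tor [Module.FinitePresentation R Z]
    (h : ∀ (N : Type u) [AddCommGroup N] [Module Rᵐᵒᵖ N], Tor1IsZero R N Z) :
    Module.Projective R Z := by
  obtain P := (inferInstance : HasProjectiveResolution (ModuleCat.of R Z)).out.some
  have hπs : Function.Surjective ((P.π.f 0).hom : P.complex.X 0 →ₗ[R] Z) := res_surjective P
  have hExt : Ext1IsZero R Z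
      (CharacterModule (CharacterModule ↥(LinearMap.ker ((P.π.f 0).hom : P.complex.X 0 →ₗ[R] Z)))) :=
    ext1IsZero_char_of_tor1IsZero P
      (h (CharacterModule ↥(LinearMap.ker ((P.π.f 0).hom : P.complex.X 0 →ₗ[R] Z))))
  obtain ⟨g, hg⟩ := ext_extend P hExt (evalCh (R := R))
  have hP0 : Module.Projective R (P.complex.X 0) := module_projective_of_projective _
  exact projective_of_char_extend ((P.π.f 0).hom : P.complex.X 0 →ₗ[R] Z) hπs g hg

end BigTor

end Stmt7Aux

end AuxProof

/-- Let `M` be a finitely presented left `R`-module that is `𝒜`-coherent (every `A ∈ 𝒜` is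
finitely presented). Then every left `R`-module is strongly `M`-`𝒜`-injective if and only if
every right `R`-module is strongly `M`-`𝒜`-flat. -/
theorem stmt7 (R : Type u) [Ring R] (M : Type u) [AddCommGroup M] [Module R M]
    (𝒜 : Set (Submodule R M)) [Module.FinitePresentation R M]
    (h𝒜 : ∀ A ∈ 𝒜, Module.FinitePresentation R A) :
    (∀ (T : Type u) [AddCommGroup T] [Module R T], SMAInjective R M 𝒜 T) ↔
      (∀ (N : Type u) [AddCommGroup N] [Module Rᵐᵒᵖ N], SMAFlat R M 𝒜 N) := by
  constructor
  · intro h N _ _ A hA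
    have hproj : Module.Projective R (M ⧸ A) :=
      Stmt7Aux.projective_of_forall_ext (fun T _ _ => h T A hA)
    exact Stmt7Aux.tor1IsZero_of_projective hproj
  · intro h T _ _ A hA
    have hfinA : Module.Finite R ↥A := by
      have := h𝒜 A hA
      infer_instance
    have hAfg : A.FG := Module.Finite.iff_fg.mp hfinA
    have hfp : Module.FinitePresentation R (M ⧸ A) :=
      Module.finitePresentation_of_surjective A.mkQ (Submodule.mkQ_surjective A)
        (by rwa [Submodule.ker_mkQ])
    have hproj : Module.Projective R (M ⧸ A) :=
      Stmt7Aux.projective_of_forall_tor (fun N _ _ => h N A hA)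
    exact Stmt7Aux.ext1IsZero_of_projective hproj
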